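/- With φ = (1+√5)/2 and q = (1-√5)/(1+√5), the q-binomial coefficient satisfies [n choose k]_q = binom(n,k)_F · φ^{k(k-n)}, where binom(n,k)_F is the Fibonomial coefficient. -/

import Mathlib

noncomputable def goldenPhi : ℝ := (1 + Real.sqrt 5) / 2

noncomputable def fibQ : ℝ := (1 - Real.sqrt 5) / (1 + Real.sqrt 5)

/-- The q-Pochhammer symbol `(a;q)_n = ∏_{j=0}^{n-1} (1 - a q^j)`. -/
noncomputable def qPoch (a q : ℝ) (n : ℕ) : ℝ := ∏ j ∈ Finset.range n, (1 - a * q ^ j)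

/-- The q-binomial coefficient `(q;q)_n / ((q;q)_k (q;q)_{n-k})`. -/
noncomputable def qBinom (q : ℝ) (n k : ℕ) : ℝ :=
  qPoch q q n / (qPoch q q k * qPoch q q (n - k))

/-- The Fibonomial coefficient `∏_{i=1}^k F_{n-i+1}/F_i`, as a real number. -/
noncomputable def fibinom (n k : ℕ) : ℝ :=
  ∏ j ∈ Finset.range k, (Nat.fib (n - j) : ℝ) / (Nat.fib (j + 1) : ℝ)

open goldenRatio

lemma goldenPhi_eq : goldenPhi = φ := rfl

lemma fibQ_eq : fibQ = ψ / φ := by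
  show (1 - Real.sqrt 5) / (1 + Real.sqrt 5) = ((1 - Real.sqrt 5)/2) / ((1 + Real.sqrt 5)/2)
  have h : (1 + Real.sqrt 5) ≠ 0 := by positivity
  field_simp

lemma key (j : ℕ) : 1 - fibQ ^ j = Real.sqrt 5 * Nat.fib j / φ ^ j := by
  rw [fibQ_eq, div_pow, Real.coe_fib_eq]
  have h5 : Real.sqrt 5 ≠ 0 := ne_of_gt (Real.sqrt_pos.mpr (by norm_num))
  have hφ : (φ:ℝ) ≠ 0 := Real.goldenRatio_ne_zero
  field_simp

/-- Product of the first `n` Fibonacci numbers (starting at `F₁`). -/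
noncomputable def Pfib (n : ℕ) : ℝ := ∏ j ∈ Finset.range n, (Nat.fib (j + 1) : ℝ)

lemma Pfib_pos (n : ℕ) : 0 < Pfib n :=
  Finset.prod_pos fun i _ => by exact_mod_cast Nat.fib_pos.mpr i.succ_pos

noncomputable def Ssum (n : ℕ) : ℕ := ∑ j ∈ Finset.range n, (j + 1)

lemma Ssum_eq (n : ℕ) : 2 * Ssum n = n * (n + 1) := by
  induction n with
  | zero => simp [Ssum]
  | succ m ih =>
    have : Ssum (m + 1) = Ssum m + (m + 1) := Finset.sum_range_succ _ _
    rw [this]; ring_nf; ring_nf at ih; omega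

lemma Ssum_add (k m : ℕ) : Ssum (k + m) = Ssum k + Ssum m + k * m := by
  have h1 := Ssum_eq (k + m); have h2 := Ssum_eq k; have h3 := Ssum_eq m
  nlinarith [h1, h2, h3]

lemma qPoch_eq (n : ℕ) :
    qPoch fibQ fibQ n = Real.sqrt 5 ^ n * Pfib n / φ ^ Ssum n := by
  unfold qPoch Pfib Ssum
  have h : ∀ j ∈ Finset.range n, 1 - fibQ * fibQ ^ j = Real.sqrt 5 * Nat.fib (j+1) / φ ^ (j+1) := by
    intro j _
    rw [← pow_succ']
    exact key (j+1)
  rw [Finset.prod_congr rfl h, Finset.prod_div_distrib, Finset.prod_mul_distrib,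
    Finset.prod_const, Finset.card_range, Finset.prod_pow_eq_pow_sum]

lemma fibinom_eq (k m : ℕ) : fibinom (k + m) k = Pfib (k + m) / (Pfib k * Pfib m) := by
  unfold fibinom
  rw [Finset.prod_div_distrib]
  have h1 : ∏ j ∈ Finset.range k, (Nat.fib (k + m - j) : ℝ)
      = ∏ j ∈ Finset.range k, (Nat.fib (m + j + 1) : ℝ) := by
    rw [← Finset.prod_range_reflect (fun j => (Nat.fib (m + j + 1) : ℝ)) k]
    apply Finset.prod_congr rfl
    intro j hj
    simp only [Finset.mem_range] at hj
    have he : k + m - j = m + (k - 1 - j) + 1 := by omega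
    rw [he]
  have h2 : Pfib (k + m) = Pfib m * ∏ j ∈ Finset.range k, (Nat.fib (m + j + 1) : ℝ) := by
    unfold Pfib
    rw [add_comm k m, Finset.prod_range_add]
  rw [h1, h2]
  have hm := (Pfib_pos m).ne'
  have hk := (Pfib_pos k).ne'
  unfold Pfib at *
  field_simp

theorem qbinom_eq_fibinom (n k : ℕ) (hk : k ≤ n) :
    qBinom fibQ n k = fibinom n k * goldenPhi ^ ((k : ℤ) * ((k : ℤ) - (n : ℤ))) := by
  obtain ⟨m, rfl⟩ := Nat.exists_eq_add_of_le hk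
  have hφ : (0:ℝ) < φ := Real.goldenRatio_pos
  have h5 : (0:ℝ) < Real.sqrt 5 := Real.sqrt_pos.mpr (by norm_num)
  have hzp : goldenPhi ^ ((k : ℤ) * ((k : ℤ) - ((k + m : ℕ) : ℤ))) = (φ ^ (k * m) : ℝ)⁻¹ := by
    rw [goldenPhi_eq]
    have : (k : ℤ) * ((k : ℤ) - ((k + m : ℕ) : ℤ)) = -((k * m : ℕ) : ℤ) := by
      push_cast; ring
    rw [this, zpow_neg, zpow_natCast]
  rw [hzp, fibinom_eq]
  unfold qBinom
  have hsub : k + m - k = m := by omega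
  rw [hsub, qPoch_eq, qPoch_eq, qPoch_eq, Ssum_add]
  have e1 : Real.sqrt 5 ^ (k + m) = Real.sqrt 5 ^ k * Real.sqrt 5 ^ m := pow_add _ _ _
  have e2 : (φ:ℝ) ^ (Ssum k + Ssum m + k * m) = φ ^ Ssum k * φ ^ Ssum m * φ ^ (k * m) :=
    by rw [pow_add, pow_add]
  rw [e1, e2]
  have p1 := (Pfib_pos (k+m)).ne'
  have p2 := (Pfib_pos k).ne'
  have p3 := (Pfib_pos m).ne'
  have q1 : (φ:ℝ) ^ Ssum k ≠ 0 := by positivity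
  have q2 : (φ:ℝ) ^ Ssum m ≠ 0 := by positivity
  have q3 : (φ:ℝ) ^ (k * m) ≠ 0 := by positivity
  have q4 : Real.sqrt 5 ^ k ≠ 0 := by positivity
  have q5 : Real.sqrt 5 ^ m ≠ 0 := by positivity
  field_simp
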